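/- Let a,b,c be real numbers and define f(t) = b/2 − 3a²/16 + 3t, g(t) = a³/32 − ab/8 + c/4, and the discriminant Δ(t) = g(t)²/4 + f(t)³/27 of the cubic x³ + (3a/4)x² + ((b+6t)/2)x + (c+3at)/4. Then: (i) for every real t, Δ(t) = ((a³−4ab+8c)/64)² + ((−3a²+8b)/48 + t)³; (ii) Δ is strictly increasing on ℝ and tends to +∞ as t → +∞; (iii) Δ(t) = 0 if and only if t = t_u, where t_u = a²/16 − b/6 − (1/16)·((a³−4ab+8c)²)^{1/3}. -/

import Mathlib

theorem quartic_fingerprint_discriminant (a b c : ℝ) :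
    let f : ℝ → ℝ := fun t => b / 2 - 3 * a ^ 2 / 16 + 3 * t
    let g : ℝ → ℝ := fun _ => a ^ 3 / 32 - a * b / 8 + c / 4
    let Δ : ℝ → ℝ := fun t => (g t) ^ 2 / 4 + (f t) ^ 3 / 27
    let tu : ℝ := a ^ 2 / 16 - b / 6
      - (1 / 16) * ((a ^ 3 - 4 * a * b + 8 * c) ^ 2) ^ ((1 : ℝ) / 3)
    (∀ t : ℝ, Δ t = ((a ^ 3 - 4 * a * b + 8 * c) / 64) ^ 2
        + ((-3 * a ^ 2 + 8 * b) / 48 + t) ^ 3) ∧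
    StrictMono Δ ∧
    Filter.Tendsto Δ Filter.atTop Filter.atTop ∧
    (∀ t : ℝ, Δ t = 0 ↔ t = tu) := by
  intro f g Δ tu
  set M : ℝ := a ^ 3 - 4 * a * b + 8 * c with hM
  have hid : ∀ t : ℝ, Δ t = (M / 64) ^ 2 + ((-3 * a ^ 2 + 8 * b) / 48 + t) ^ 3 := by
    intro t; simp only [Δ, f, g, hM]; ring
  have hodd : Odd 3 := ⟨1, by norm_num⟩
  refine ⟨hid, ?_, ?_, ?_⟩
  · intro t1 t2 h
    rw [hid, hid]
    have := hodd.strictMono_pow (R := ℝ) (show (-3 * a ^ 2 + 8 * b) / 48 + t1 < (-3 * a ^ 2 + 8 * b) / 48 + t2 by linarith)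
    linarith
  · have h1 : Filter.Tendsto (fun t : ℝ => ((-3 * a ^ 2 + 8 * b) / 48 + t) ^ 3)
        Filter.atTop Filter.atTop :=
      (Filter.tendsto_pow_atTop (by norm_num)).comp
        (Filter.tendsto_atTop_add_const_left _ _ Filter.tendsto_id)
    have h2 := Filter.tendsto_atTop_add_const_left Filter.atTop ((M / 64) ^ 2) h1
    exact h2.congr (fun t => (hid t).symm)
  · intro t
    have hMnn : (0 : ℝ) ≤ M ^ 2 := sq_nonneg M
    have hcube : ((M ^ 2) ^ ((1 : ℝ) / 3)) ^ 3 = M ^ 2 := by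
      rw [← Real.rpow_natCast ((M ^ 2) ^ ((1 : ℝ) / 3)) 3, ← Real.rpow_mul hMnn]
      norm_num
    rw [hid t]
    constructor
    · intro h
      have h3 : ((-3 * a ^ 2 + 8 * b) / 48 + t) ^ 3 =
          (-(1 / 16) * (M ^ 2) ^ ((1 : ℝ) / 3)) ^ 3 := by
        have : (-(1 / 16) * (M ^ 2) ^ ((1 : ℝ) / 3)) ^ 3 =
            -(1 / 4096) * ((M ^ 2) ^ ((1 : ℝ) / 3)) ^ 3 := by ring
        rw [this, hcube]; nlinarith [h]
      have hinj : ∀ x y : ℝ, x ^ 3 = y ^ 3 → x = y := fun x y h => (hodd.strictMono_pow (R := ℝ)).injective h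
      have := hinj _ _ h3
      simp only [tu, hM] at *
      linarith
    · intro h
      have h3 : ((-3 * a ^ 2 + 8 * b) / 48 + t) =
          -(1 / 16) * (M ^ 2) ^ ((1 : ℝ) / 3) := by
        simp only [tu, hM] at h ⊢; linarith [h]
      rw [h3]
      have : (-(1 / 16) * (M ^ 2) ^ ((1 : ℝ) / 3)) ^ 3 =
          -(1 / 4096) * ((M ^ 2) ^ ((1 : ℝ) / 3)) ^ 3 := by ring
      rw [this, hcube]; ring
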